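/- Let Ω > 0. Let H be the complex Hilbert space ℓ² over the index set {ℓ ∈ ℕ : ℓ ≥ 1}, with standard orthonormal basis (e_ℓ)_{ℓ ≥ 1}, and adopt the convention e₀ := 0. Set λ_ℓ = ℓ(ℓ+1) and a_ℓ = √( (ℓ+1)(ℓ−1) / ((2ℓ+1)(2ℓ−1)) ) for ℓ ≥ 1. Let T : H → H be a continuous linear map satisfying, for every ℓ ≥ 1, T e_ℓ = (1 − 6/λ_ℓ)·(a_ℓ·e_{ℓ−1} + a_{ℓ+1}·e_{ℓ+1}) − (Ω/λ_ℓ)·e_ℓ. Then the ℂ-spectrum of T is contained in the real axis: every λ in the spectrum of T satisfies Im λ = 0. -/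

import Mathlib

open Complex

/-- The standard orthonormal basis vectors of `ℓ²({ℓ ∈ ℕ : ℓ ≥ 1}; ℂ)`, with the
convention `e₀ := 0`. -/
noncomputable def e (ℓ : ℕ) : lp (fun _ : {ℓ : ℕ // 1 ≤ ℓ} => ℂ) 2 :=
  if h : 1 ≤ ℓ then lp.single 2 ⟨ℓ, h⟩ 1 else 0

/-- The eigenvalue `λ_ℓ = ℓ(ℓ+1)` of `−Δ` on the sphere. -/
noncomputable def lamCoef (ℓ : ℕ) : ℝ := (ℓ : ℝ) * ((ℓ : ℝ) + 1)

/-- The coefficient `a_ℓ = √((ℓ+1)(ℓ−1)/((2ℓ+1)(2ℓ−1)))` for `ℓ ≥ 1`. -/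
noncomputable def aCoef (ℓ : ℕ) : ℝ :=
  Real.sqrt ((((ℓ : ℝ) + 1) * ((ℓ : ℝ) - 1)) / ((2 * (ℓ : ℝ) + 1) * (2 * (ℓ : ℝ) - 1)))

open scoped ENNReal

namespace SpecAux

abbrev Idx : Type := {ℓ : ℕ // 1 ≤ ℓ}
abbrev Hs : Type := lp (fun _ : Idx => ℂ) 2

lemma e_eq (ℓ : ℕ) (h : 1 ≤ ℓ) : e ℓ = lp.single 2 (⟨ℓ, h⟩ : Idx) 1 := dif_pos h

lemma e_zero : e 0 = 0 := dif_neg (by norm_num)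

lemma e_apply (k : ℕ) (i : Idx) : (e k) i = if (i : ℕ) = k then 1 else 0 := by
  by_cases hik : (i : ℕ) = k
  · obtain ⟨iv, hi⟩ := i
    simp only at hik
    subst hik
    rw [e_eq iv hi, if_pos rfl, lp.single_apply_self]
  · rw [if_neg hik]
    by_cases h : 1 ≤ k
    · rw [e_eq k h, lp.single_apply_ne]
      exact fun hh => hik (congrArg Subtype.val hh)
    · have hk : k = 0 := by omega
      subst hk
      rw [e_zero]
      rfl

lemma inner_e_left (k : ℕ) (hk : 1 ≤ k) (x : Hs) :
    (inner ℂ (e k) x : ℂ) = x ⟨k, hk⟩ := by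
  rw [e_eq k hk, lp.inner_single_left]
  simp

lemma inner_e_e (j k : ℕ) (hj : 1 ≤ j) :
    (inner ℂ (e j) (e k) : ℂ) = if j = k then 1 else 0 := by
  rw [inner_e_left j hj, e_apply]

lemma lamCoef_one : lamCoef 1 = 2 := by norm_num [lamCoef]
lemma lamCoef_two : lamCoef 2 = 6 := by norm_num [lamCoef]
lemma lamCoef_pos (k : ℕ) (hk : 1 ≤ k) : 0 < lamCoef k := by
  have : (1 : ℝ) ≤ (k : ℝ) := by exact_mod_cast hk
  unfold lamCoef; nlinarith

lemma aCoef_one : aCoef 1 = 0 := by norm_num [aCoef]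

/-- the weight sequence -/
noncomputable def w (k : ℕ) : ℝ := if 3 ≤ k then 1 - 6 / lamCoef k else 1

lemma w_le_one (k : ℕ) : w k ≤ 1 := by
  unfold w
  split_ifs with h
  · have hpos : 0 < lamCoef k := lamCoef_pos k (by omega)
    have : 0 ≤ 6 / lamCoef k := by positivity
    linarith
  · exact le_rfl

lemma half_le_w (k : ℕ) : 1/2 ≤ w k := by
  unfold w
  split_ifs with h
  · have h12 : (12 : ℝ) ≤ lamCoef k := by
      have : (3:ℝ) ≤ (k:ℝ) := by exact_mod_cast h
      unfold lamCoef; nlinarith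
    have hpos : (0:ℝ) < lamCoef k := by linarith
    have : 6 / lamCoef k ≤ 6 / 12 := by
      apply div_le_div_of_nonneg_left (by norm_num) (by norm_num) h12
    linarith
  · norm_num

lemma w_pos (k : ℕ) : 0 < w k := lt_of_lt_of_le (by norm_num) (half_le_w k)

lemma two_toReal : ((2 : ℝ≥0∞)).toReal = 2 := by norm_num

lemma memℓp_diag (d : Idx → ℝ) (C : ℝ) (hC : 0 ≤ C) (hd : ∀ i, |d i| ≤ C) (x : Hs) :
    Memℓp (fun i => (d i : ℂ) * x i) 2 := by
  apply memℓp_gen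
  have h2 : (0:ℝ) < (2 : ℝ≥0∞).toReal := by norm_num
  have hs : Summable fun i => ‖x i‖ ^ (2 : ℝ≥0∞).toReal := (lp.memℓp x).summable h2
  refine Summable.of_nonneg_of_le (fun i => ?_) (fun i => ?_) (hs.mul_left (C ^ (2 : ℝ≥0∞).toReal))
  · positivity
  · have h1 : ‖(d i : ℂ) * x i‖ = |d i| * ‖x i‖ := by
      rw [norm_mul, norm_real, Real.norm_eq_abs]
    rw [h1, Real.mul_rpow (abs_nonneg _) (norm_nonneg _)]
    exact mul_le_mul_of_nonneg_right (Real.rpow_le_rpow (abs_nonneg _) (hd i) (by norm_num))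
      (Real.rpow_nonneg (norm_nonneg _) _)

/-- diagonal multiplication operator with real weights -/
noncomputable def diagOp (d : Idx → ℝ) (C : ℝ) (hC : 0 ≤ C) (hd : ∀ i, |d i| ≤ C) :
    Hs →L[ℂ] Hs :=
  LinearMap.mkContinuous
    { toFun := fun x => (⟨fun i => (d i : ℂ) * x i, memℓp_diag d C hC hd x⟩ : Hs)
      map_add' := fun x y => by
        apply lp.ext
        funext i
        simp only [lp.coeFn_add, Pi.add_apply]
        show (d i : ℂ) * ((x + y) i) = (d i : ℂ) * x i + (d i : ℂ) * y i
        rw [lp.coeFn_add]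
        simp [mul_add]
      map_smul' := fun c x => by
        apply lp.ext
        funext i
        show (d i : ℂ) * ((c • x) i) = ((c • (⟨fun i => (d i : ℂ) * x i, memℓp_diag d C hC hd x⟩ : Hs)) : Hs) i
        rw [lp.coeFn_smul, lp.coeFn_smul]
        simp [mul_comm, mul_left_comm] }
    C
    (fun x => by
      have h2 : (0:ℝ) < (2 : ℝ≥0∞).toReal := by norm_num
      refine lp.norm_le_of_tsum_le h2 (by positivity) ?_
      have hx : ‖x‖ ^ (2:ℝ≥0∞).toReal = ∑' i, ‖x i‖ ^ (2:ℝ≥0∞).toReal :=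
        lp.norm_rpow_eq_tsum h2 x
      have hsum : Summable fun i => ‖x i‖ ^ (2:ℝ≥0∞).toReal := (lp.memℓp x).summable h2
      have hle : ∑' i, ‖(fun i => (d i : ℂ) * x i) i‖ ^ (2:ℝ≥0∞).toReal
          ≤ ∑' i, (C ^ (2:ℝ≥0∞).toReal) * ‖x i‖ ^ (2:ℝ≥0∞).toReal := by
        refine Summable.tsum_le_tsum (fun i => ?_) ?_ (hsum.mul_left _)
        · have h1 : ‖(d i : ℂ) * x i‖ = |d i| * ‖x i‖ := by
            rw [norm_mul, norm_real, Real.norm_eq_abs]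
          simp only [h1]
          rw [Real.mul_rpow (abs_nonneg _) (norm_nonneg _)]
          exact mul_le_mul_of_nonneg_right (Real.rpow_le_rpow (abs_nonneg _) (hd i) (by norm_num))
            (Real.rpow_nonneg (norm_nonneg _) _)
        · exact (memℓp_diag d C hC hd x).summable h2
      calc ∑' i, ‖(fun i => (d i : ℂ) * x i) i‖ ^ (2:ℝ≥0∞).toReal
          ≤ (C ^ (2:ℝ≥0∞).toReal) * ∑' i, ‖x i‖ ^ (2:ℝ≥0∞).toReal := by
            rw [← tsum_mul_left]; exact hle
        _ = (C * ‖x‖) ^ (2:ℝ≥0∞).toReal := by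
            rw [← hx, ← Real.mul_rpow hC (norm_nonneg _)])

lemma diagOp_apply (d : Idx → ℝ) (C : ℝ) (hC : 0 ≤ C) (hd : ∀ i, |d i| ≤ C) (x : Hs) (i : Idx) :
    (diagOp d C hC hd x) i = (d i : ℂ) * x i := rfl

lemma diagOp_norm_le (d : Idx → ℝ) (C : ℝ) (hC : 0 ≤ C) (hd : ∀ i, |d i| ≤ C) (x : Hs) :
    ‖diagOp d C hC hd x‖ ≤ C * ‖x‖ := by
  have := (diagOp d C hC hd).le_opNorm x
  have hn : ‖diagOp d C hC hd‖ ≤ C := LinearMap.mkContinuous_norm_le _ hC _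
  calc ‖diagOp d C hC hd x‖ ≤ ‖diagOp d C hC hd‖ * ‖x‖ := this
    _ ≤ C * ‖x‖ := by
        exact mul_le_mul_of_nonneg_right hn (norm_nonneg _)


lemma w_abs_le_one (i : Idx) : |w (i : ℕ)| ≤ 1 :=
  abs_le.2 ⟨by linarith [w_pos (i:ℕ)], w_le_one _⟩

lemma winv_abs_le_two (i : Idx) : |(w (i : ℕ))⁻¹| ≤ 2 := by
  have h1 := half_le_w (i : ℕ)
  have h2 := w_pos (i : ℕ)
  rw [abs_of_pos (by positivity)]
  rw [inv_le_comm₀ h2 (by norm_num)]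
  linarith

/-- The diagonal weight operator. -/
noncomputable def Gop : Hs →L[ℂ] Hs :=
  diagOp (fun i => w (i : ℕ)) 1 zero_le_one w_abs_le_one

/-- The inverse diagonal weight operator. -/
noncomputable def Gop' : Hs →L[ℂ] Hs :=
  diagOp (fun i => (w (i : ℕ))⁻¹) 2 (by norm_num) winv_abs_le_two

lemma Gop_Gop' (x : Hs) : Gop (Gop' x) = x := by
  apply lp.ext
  funext i
  show (w (i:ℕ) : ℂ) * ((w (i:ℕ) : ℝ)⁻¹ * x i) = x i
  have := (w_pos (i : ℕ)).ne'
  have hne : ((w (i:ℕ) : ℝ) : ℂ) ≠ 0 := by exact_mod_cast this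
  push_cast
  field_simp

lemma Gop_norm_le (x : Hs) : ‖Gop x‖ ≤ ‖x‖ := by
  simpa [Gop] using diagOp_norm_le (fun i => w (i : ℕ)) 1 zero_le_one w_abs_le_one x

lemma Gop_e (k : ℕ) (hk : 1 ≤ k) : Gop (e k) = ((w k : ℝ) : ℂ) • e k := by
  apply lp.ext
  funext i
  show (w (i:ℕ) : ℂ) * (e k) i = ((w k : ℝ) : ℂ) • (e k) i
  rw [e_apply]
  by_cases h : (i : ℕ) = k
  · rw [if_pos h, h]; simp
  · rw [if_neg h]; simp

lemma gsa (x y : Hs) : (inner ℂ (Gop x) y : ℂ) = inner ℂ x (Gop y) := by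
  rw [lp.inner_eq_tsum, lp.inner_eq_tsum]
  apply tsum_congr
  intro i
  rw [RCLike.inner_apply', RCLike.inner_apply']
  show (starRingEnd ℂ) ((w (i:ℕ) : ℂ) * x i) * y i = (starRingEnd ℂ) (x i) * ((w (i:ℕ) : ℂ) * y i)
  rw [map_mul, Complex.conj_ofReal]
  ring

/-- expansion of any element in the basis -/
lemma hasSum_basis (x : Hs) : HasSum (fun i : Idx => x i • e (i : ℕ)) x := by
  have h := lp.hasSum_single (E := fun _ : Idx => ℂ) (p := 2) (by norm_num) x
  have heq : (fun i : Idx => x i • e (i : ℕ)) = fun i : Idx => lp.single 2 i (x i) := by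
    funext i
    rw [show e (i : ℕ) = lp.single 2 (⟨(i : ℕ), i.2⟩ : Idx) 1 from e_eq _ i.2]
    have : (⟨(i : ℕ), i.2⟩ : Idx) = i := rfl
    rw [this, ← lp.single_smul, smul_eq_mul, mul_one]
  rw [heq]
  exact h

/-- continuous linear maps agreeing on the basis agree -/
lemma clm_ext_basis {W : Type*} [NormedAddCommGroup W] [NormedSpace ℂ W]
    (f g : Hs →L[ℂ] W) (h : ∀ k : ℕ, 1 ≤ k → f (e k) = g (e k)) : ∀ x, f x = g x := by
  intro x
  have hf : HasSum (fun i : Idx => f (x i • e (i : ℕ))) (f x) :=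
    (hasSum_basis x).mapL f
  have hg : HasSum (fun i : Idx => g (x i • e (i : ℕ))) (g x) :=
    (hasSum_basis x).mapL g
  have : (fun i : Idx => f (x i • e (i : ℕ))) = fun i : Idx => g (x i • e (i : ℕ)) := by
    funext i
    rw [map_smul, map_smul, h (i : ℕ) i.2]
  rw [this] at hf
  exact hf.unique hg

section Ops
variable (Omega : ℝ) (T : Hs →L[ℂ] Hs)
variable (hT : ∀ ℓ : ℕ, 1 ≤ ℓ →
      T (e ℓ) = ((1 : ℂ) - 6 / (lamCoef ℓ : ℂ)) •
        ((aCoef ℓ : ℂ) • e (ℓ - 1) + (aCoef (ℓ + 1) : ℂ) • e (ℓ + 1)) - ((Omega / lamCoef ℓ : ℝ) : ℂ) • e ℓ)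

include hT

lemma T_e1 : T (e 1) = ((-(Omega/2) : ℝ) : ℂ) • e 1 + ((-2 * aCoef 2 : ℝ) : ℂ) • e 2 := by
  rw [hT 1 le_rfl]
  rw [aCoef_one, e_zero, lamCoef_one]
  push_cast
  match_scalars <;> ring

lemma T_e2 : T (e 2) = ((-(Omega/6) : ℝ) : ℂ) • e 2 := by
  rw [hT 2 (by norm_num), lamCoef_two]
  push_cast
  match_scalars <;> ring

end Ops

/-- inner ℂ product values -/
lemma inner_e11 : (inner ℂ (e 1) (e 1) : ℂ) = 1 := by rw [inner_e_e 1 1 le_rfl]; norm_num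
lemma inner_e12 : (inner ℂ (e 1) (e 2) : ℂ) = 0 := by rw [inner_e_e 1 2 le_rfl]; norm_num
lemma inner_e21 : (inner ℂ (e 2) (e 1) : ℂ) = 0 := by rw [inner_e_e 2 1 one_le_two]; norm_num
lemma inner_e22 : (inner ℂ (e 2) (e 2) : ℂ) = 1 := by rw [inner_e_e 2 2 one_le_two]; norm_num

/-- The rank-two orthogonal projection onto span{e 1, e 2}. -/
noncomputable def Pop : Hs →L[ℂ] Hs :=
  (innerSL ℂ (e 1)).smulRight (e 1) + (innerSL ℂ (e 2)).smulRight (e 2)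

lemma Pop_apply (x : Hs) :
    Pop x = (inner ℂ (e 1) x : ℂ) • e 1 + (inner ℂ (e 2) x : ℂ) • e 2 := rfl

lemma Pop_comb (c d : ℂ) : Pop (c • e 1 + d • e 2) = c • e 1 + d • e 2 := by
  rw [Pop_apply]
  simp only [inner_add_right, inner_smul_right, inner_e11, inner_e12, inner_e21, inner_e22]
  simp

lemma Pop_e1 : Pop (e 1) = e 1 := by
  simpa using Pop_comb 1 0

lemma Pop_e2 : Pop (e 2) = e 2 := by
  simpa using Pop_comb 0 1

lemma Pop_e_ge3 (k : ℕ) (hk : 3 ≤ k) : Pop (e k) = 0 := by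
  have h1 : (inner ℂ (e 1) (e k) : ℂ) = 0 := by
    rw [inner_e_e 1 k le_rfl, if_neg (by omega)]
  have h2 : (inner ℂ (e 2) (e k) : ℂ) = 0 := by
    rw [inner_e_e 2 k one_le_two, if_neg (by omega)]
  simp [Pop_apply, h1, h2]

lemma Pop_idem : Pop ∘L Pop = Pop := by
  refine ContinuousLinearMap.ext fun x => ?_
  simp only [ContinuousLinearMap.comp_apply]
  rw [Pop_apply x, map_add, map_smul, map_smul, Pop_e1, Pop_e2]

/-- complement projection -/
noncomputable def Qop : Hs →L[ℂ] Hs := 1 - Pop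

lemma Qop_apply (x : Hs) : Qop x = x - Pop x := rfl

lemma Pop_Pop (x : Hs) : Pop (Pop x) = Pop x := by
  have := congrArg (fun (f : Hs →L[ℂ] Hs) => f x) Pop_idem
  simpa using this

lemma Pop_Qop (x : Hs) : Pop (Qop x) = 0 := by
  rw [Qop_apply, map_sub, Pop_Pop, sub_self]

lemma Qop_Pop (x : Hs) : Qop (Pop x) = 0 := by
  rw [Qop_apply, Pop_Pop, sub_self]

lemma Qop_Qop (x : Hs) : Qop (Qop x) = Qop x := by
  rw [Qop_apply (Qop x), Pop_Qop, sub_zero]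

lemma Qop_e1 : Qop (e 1) = 0 := by rw [Qop_apply, Pop_e1, sub_self]
lemma Qop_e2 : Qop (e 2) = 0 := by rw [Qop_apply, Pop_e2, sub_self]
lemma Qop_e_ge3 (k : ℕ) (hk : 3 ≤ k) : Qop (e k) = e k := by
  rw [Qop_apply, Pop_e_ge3 k hk, sub_zero]

/-- The tridiagonal matrix of `Q T Q`. -/
noncomputable def tMat (Omega : ℝ) (j k : ℕ) : ℝ :=
  if 3 ≤ j ∧ 3 ≤ k then
    (if j = k then -(Omega / lamCoef k)
     else if j = k + 1 then w k * aCoef (k + 1)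
     else if k = j + 1 then w k * aCoef k
     else 0)
  else 0

lemma tMat_symm (Omega : ℝ) (j k : ℕ) :
    w j * tMat Omega j k = w k * tMat Omega k j := by
  unfold tMat
  split_ifs <;> (try omega) <;> subst_vars <;> (try omega) <;> ring

lemma tMat_zero_out (Omega : ℝ) (j k : ℕ) (h1 : j ≠ k) (h2 : j ≠ k + 1) (h3 : k ≠ j + 1) :
    tMat Omega j k = 0 := by
  unfold tMat
  by_cases h : 3 ≤ j ∧ 3 ≤ k
  · rw [if_pos h, if_neg h1, if_neg h2, if_neg h3]
  · rw [if_neg h]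

lemma g_inner_term (x : Hs) (i : Idx) :
    (inner ℂ ((Gop x) i) (x i) : ℂ) = ((w (i : ℕ) * ‖x i‖^2 : ℝ) : ℂ) := by
  rw [RCLike.inner_apply']
  show (starRingEnd ℂ) ((Gop x) i) * x i = _
  show (starRingEnd ℂ) ((w (i:ℕ) : ℂ) * x i) * x i = _
  rw [map_mul, Complex.conj_ofReal, mul_assoc, mul_comm ((starRingEnd ℂ) (x i)) (x i),
    Complex.mul_conj]
  push_cast [Complex.normSq_eq_norm_sq]
  norm_num

lemma g_inner_hasSum (x : Hs) :
    HasSum (fun i : Idx => w (i : ℕ) * ‖x i‖^2) ((inner ℂ (Gop x) x : ℂ)).re ∧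
      ((inner ℂ (Gop x) x : ℂ)).im = 0 := by
  have hsum := lp.hasSum_inner (𝕜 := ℂ) (Gop x) x
  have hsum' : HasSum (fun i : Idx => ((w (i : ℕ) * ‖x i‖^2 : ℝ) : ℂ)) (inner ℂ (Gop x) x : ℂ) := by
    refine HasSum.congr_fun hsum ?_
    intro i
    exact (g_inner_term x i).symm
  constructor
  · have := hsum'.mapL Complex.reCLM
    simp only [Complex.reCLM_apply, Complex.ofReal_re] at this
    exact this
  · have := hsum'.mapL Complex.imCLM
    simp only [Complex.imCLM_apply, Complex.ofReal_im] at this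
    exact this.unique hasSum_zero

lemma g_inner_im (x : Hs) : ((inner ℂ (Gop x) x : ℂ)).im = 0 := (g_inner_hasSum x).2

lemma norm_sq_hasSum (x : Hs) : HasSum (fun i : Idx => ‖x i‖^2) (‖x‖^2) := by
  have h2 : (0:ℝ) < (2 : ℝ≥0∞).toReal := by norm_num
  have h := lp.hasSum_norm h2 x
  have heq : ∀ a : ℝ, 0 ≤ a → a ^ (2 : ℝ≥0∞).toReal = a ^ 2 := by
    intro a ha
    rw [show ((2 : ℝ≥0∞)).toReal = ((2:ℕ):ℝ) by norm_num, Real.rpow_natCast]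
  have h' : HasSum (fun i : Idx => ‖x i‖ ^ 2) (‖x‖ ^ (2 : ℝ≥0∞).toReal) := by
    refine HasSum.congr_fun h ?_
    intro i
    exact (heq (‖x i‖) (norm_nonneg (x i))).symm
  rwa [heq (‖x‖) (norm_nonneg x)] at h'

lemma g_inner_lower (x : Hs) : (1/2) * ‖x‖^2 ≤ ((inner ℂ (Gop x) x : ℂ)).re := by
  have h1 := (g_inner_hasSum x).1
  have h2 := (norm_sq_hasSum x).mul_left (1/2)
  refine hasSum_le (fun i => ?_) h2 h1
  have := half_le_w (i : ℕ)
  nlinarith [sq_nonneg (‖x i‖), norm_nonneg (x i)]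

lemma w_cast (k : ℕ) (hk : 3 ≤ k) :
    ((1 : ℂ) - 6 / (lamCoef k : ℂ)) = ((w k : ℝ) : ℂ) := by
  unfold w
  rw [if_pos hk]
  push_cast
  ring

section Ops2
variable (Omega : ℝ) (T : Hs →L[ℂ] Hs)
variable (hT : ∀ ℓ : ℕ, 1 ≤ ℓ →
      T (e ℓ) = ((1 : ℂ) - 6 / (lamCoef ℓ : ℂ)) •
        ((aCoef ℓ : ℂ) • e (ℓ - 1) + (aCoef (ℓ + 1) : ℂ) • e (ℓ + 1)) - ((Omega / lamCoef ℓ : ℝ) : ℂ) • e ℓ)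

include hT

lemma PT_e1 : Pop (T (e 1)) = T (e 1) := by
  rw [T_e1 Omega T hT]
  rw [map_add, map_smul, map_smul, Pop_e1, Pop_e2]

lemma PT_e2 : Pop (T (e 2)) = T (e 2) := by
  rw [T_e2 Omega T hT, map_smul, Pop_e2]

lemma Aval (x : Hs) :
    Pop (T (Pop x)) = (inner ℂ (e 1) x : ℂ) • T (e 1) + (inner ℂ (e 2) x : ℂ) • T (e 2) := by
  rw [Pop_apply x]
  simp only [map_add, map_smul]
  rw [PT_e1 Omega T hT, PT_e2 Omega T hT]

lemma hTP : T ∘L Pop = Pop ∘L T ∘L Pop := by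
  refine ContinuousLinearMap.ext fun x => ?_
  simp only [ContinuousLinearMap.comp_apply]
  rw [Aval Omega T hT x, Pop_apply x]
  simp only [map_add, map_smul]

lemma hAA : (Pop ∘L T ∘L Pop) ∘L (Pop ∘L T ∘L Pop)
    = ((-(2*Omega/3) : ℝ) : ℂ) • (Pop ∘L T ∘L Pop) + ((-(Omega^2/12) : ℝ) : ℂ) • Pop := by
  refine ContinuousLinearMap.ext fun x => ?_
  simp only [ContinuousLinearMap.comp_apply, ContinuousLinearMap.add_apply,
    ContinuousLinearMap.smul_apply]
  rw [Aval Omega T hT x]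
  simp only [map_add, map_smul]
  rw [Aval Omega T hT (T (e 1)), Aval Omega T hT (T (e 2))]
  rw [T_e1 Omega T hT, T_e2 Omega T hT, Pop_apply x]
  simp only [inner_add_right, inner_smul_right, inner_e11, inner_e12, inner_e21, inner_e22]
  match_scalars <;> push_cast <;> ring


lemma T_ek (k : ℕ) (hk : 3 ≤ k) :
    T (e k) = ((w k : ℝ) : ℂ) • ((aCoef k : ℂ) • e (k - 1) + (aCoef (k + 1) : ℂ) • e (k + 1))
      - ((Omega / lamCoef k : ℝ) : ℂ) • e k := by
  rw [hT k (by omega), w_cast k hk]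

lemma V_e (k : ℕ) (hk : 1 ≤ k) :
    Qop (T (Qop (e k))) =
      ((tMat Omega (k - 1) k : ℝ) : ℂ) • e (k - 1) + ((tMat Omega k k : ℝ) : ℂ) • e k
        + ((tMat Omega (k + 1) k : ℝ) : ℂ) • e (k + 1) := by
  by_cases hk1 : k = 1
  · subst hk1
    rw [Qop_e1, map_zero, map_zero]
    norm_num [tMat]
  by_cases hk2 : k = 2
  · subst hk2
    rw [Qop_e2, map_zero, map_zero]
    norm_num [tMat]
  by_cases hk3 : k = 3
  · subst hk3
    rw [Qop_e_ge3 3 (by norm_num), T_ek Omega T hT 3 (by norm_num)]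
    simp only [map_sub, map_add, map_smul]
    norm_num
    rw [Qop_e2, Qop_e_ge3 4 (by norm_num), Qop_e_ge3 3 (by norm_num)]
    have h1 : tMat Omega 2 3 = 0 := by norm_num [tMat]
    have h2 : tMat Omega 3 3 = -(Omega / lamCoef 3) := by norm_num [tMat]
    have h3 : tMat Omega 4 3 = w 3 * aCoef 4 := by norm_num [tMat]
    rw [h1, h2, h3]
    match_scalars <;> push_cast <;> ring_nf <;> norm_num
  · have hk4 : 4 ≤ k := by omega
    rw [Qop_e_ge3 k (by omega), T_ek Omega T hT k (by omega)]
    simp only [map_sub, map_add, map_smul]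
    rw [Qop_e_ge3 (k - 1) (by omega), Qop_e_ge3 (k + 1) (by omega), Qop_e_ge3 k (by omega)]
    have h1 : tMat Omega (k - 1) k = w k * aCoef k := by
      unfold tMat
      rw [if_pos ⟨by omega, by omega⟩, if_neg (by omega), if_neg (by omega), if_pos (by omega)]
    have h2 : tMat Omega k k = -(Omega / lamCoef k) := by
      unfold tMat
      rw [if_pos ⟨by omega, by omega⟩, if_pos rfl]
    have h3 : tMat Omega (k + 1) k = w k * aCoef (k + 1) := by
      unfold tMat
      rw [if_pos ⟨by omega, by omega⟩, if_neg (by omega), if_pos rfl]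
    rw [h1, h2, h3]
    match_scalars <;> push_cast <;> ring

lemma V_e_coord (k : ℕ) (hk : 1 ≤ k) (i : Idx) :
    (Qop (T (Qop (e k))) : Hs) i = ((tMat Omega (i : ℕ) k : ℝ) : ℂ) := by
  have hi : 1 ≤ (i : ℕ) := i.2
  rw [V_e Omega T hT k hk]
  rw [lp.coeFn_add, lp.coeFn_add]
  simp only [Pi.add_apply, lp.coeFn_smul, Pi.smul_apply, e_apply, smul_eq_mul]
  by_cases hA : (i : ℕ) = k - 1 ∧ 2 ≤ k
  · rw [if_pos hA.1, if_neg (by omega), if_neg (by omega), hA.1]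
    ring
  by_cases hB : (i : ℕ) = k
  · rw [if_neg (by omega), if_pos hB, if_neg (by omega), hB]
    ring
  by_cases hC : (i : ℕ) = k + 1
  · rw [if_neg (by omega), if_neg (by omega), if_pos hC, hC]
    ring
  · rw [if_neg (by omega), if_neg hB, if_neg hC]
    have : tMat Omega (i : ℕ) k = 0 := tMat_zero_out Omega _ _ hB hC (by omega)
    rw [this]
    norm_num

lemma stepA (j k : ℕ) (hj : 1 ≤ j) (hk : 1 ≤ k) :
    (inner ℂ (e j) (Gop (Qop (T (Qop (e k))))) : ℂ)
      = inner ℂ (Qop (T (Qop (e j)))) (Gop (e k)) := by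
  rw [inner_e_left j hj]
  have hL : (Gop (Qop (T (Qop (e k)))) : Hs) ⟨j, hj⟩
      = ((w j : ℝ) : ℂ) * ((tMat Omega j k : ℝ) : ℂ) := by
    show ((w ((⟨j, hj⟩ : Idx) : ℕ) : ℝ) : ℂ) * ((Qop (T (Qop (e k))) : Hs) ⟨j, hj⟩) = _
    rw [V_e_coord Omega T hT k hk ⟨j, hj⟩]
  rw [hL, Gop_e k hk, inner_smul_right]
  have h2 : (inner ℂ (Qop (T (Qop (e j)))) (e k) : ℂ) = ((tMat Omega k j : ℝ) : ℂ) := by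
    rw [← inner_conj_symm, inner_e_left k hk, V_e_coord Omega T hT j hj ⟨k, hk⟩]
    exact Complex.conj_ofReal _
  rw [h2]
  have := tMat_symm Omega j k
  push_cast
  exact_mod_cast congrArg (fun r : ℝ => (r : ℂ)) this

lemma stepB (k : ℕ) (hk : 1 ≤ k) (x : Hs) :
    (inner ℂ (e k) (Gop (Qop (T (Qop x)))) : ℂ)
      = inner ℂ (Qop (T (Qop (e k)))) (Gop x) := by
  have h := clm_ext_basis ((innerSL ℂ (e k)).comp (Gop.comp (Qop ∘L T ∘L Qop)))
      ((innerSL ℂ (Qop (T (Qop (e k))))).comp Gop) ?_ x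
  · simpa using h
  · intro m hm
    simpa using stepA Omega T hT k m hk hm

lemma symV (x y : Hs) :
    (inner ℂ (Gop (Qop (T (Qop x)))) y : ℂ)
      = inner ℂ (Gop x) (Qop (T (Qop y))) := by
  have h := clm_ext_basis (innerSL ℂ (Gop (Qop (T (Qop x)))))
      ((innerSL ℂ (Gop x)).comp (Qop ∘L T ∘L Qop)) ?_ y
  · simpa using h
  · intro m hm
    simp only [ContinuousLinearMap.comp_apply, innerSL_apply_apply]
    rw [← inner_conj_symm, stepB Omega T hT m hm x, inner_conj_symm]

lemma GVx_real (x : Hs) : ((inner ℂ (Gop (Qop (T (Qop x)))) x : ℂ)).im = 0 := by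
  refine Complex.conj_eq_iff_im.mp ?_
  rw [inner_conj_symm, ← gsa]
  exact (symV Omega T hT x x).symm

lemma boundedBelow (μ : ℂ) (hμ : μ.im ≠ 0) (x : Hs) :
    |μ.im| / 2 * ‖x‖ ≤ ‖Qop (T (Qop x)) - μ • x‖ := by
  by_cases hx : x = 0
  · simp [hx]
  set u := Qop (T (Qop x)) - μ • x with hu
  set t : ℂ := inner ℂ (Gop x) x with ht
  have hzdec : (inner ℂ (Gop u) x : ℂ)
      = inner ℂ (Gop (Qop (T (Qop x)))) x - (starRingEnd ℂ) μ * t := by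
    rw [hu, map_sub, map_smul, inner_sub_left, inner_smul_left, ht]
  have htim : t.im = 0 := g_inner_im x
  have htre : (1/2) * ‖x‖^2 ≤ t.re := g_inner_lower x
  have him : ((inner ℂ (Gop u) x : ℂ)).im = μ.im * t.re := by
    rw [hzdec, Complex.sub_im, GVx_real Omega T hT x, Complex.mul_im]
    simp [htim, Complex.conj_im, Complex.conj_re]
  have habs : |μ.im| * t.re ≤ ‖u‖ * ‖x‖ := by
    have h1 : |((inner ℂ (Gop u) x : ℂ)).im| ≤ ‖(inner ℂ (Gop u) x : ℂ)‖ := Complex.abs_im_le_norm _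
    have h2 : ‖(inner ℂ (Gop u) x : ℂ)‖ ≤ ‖Gop u‖ * ‖x‖ := norm_inner_le_norm _ _
    have h3 : ‖Gop u‖ * ‖x‖ ≤ ‖u‖ * ‖x‖ :=
      mul_le_mul_of_nonneg_right (Gop_norm_le u) (norm_nonneg _)
    have h4 : |μ.im * t.re| = |μ.im| * t.re := by
      rw [abs_mul, _root_.abs_of_nonneg (by nlinarith [norm_nonneg x, sq_nonneg ‖x‖] : 0 ≤ t.re)]
    calc |μ.im| * t.re = |((inner ℂ (Gop u) x : ℂ)).im| := by rw [him, h4]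
      _ ≤ ‖(inner ℂ (Gop u) x : ℂ)‖ := h1
      _ ≤ ‖Gop u‖ * ‖x‖ := h2
      _ ≤ ‖u‖ * ‖x‖ := h3
  have hxpos : 0 < ‖x‖ := norm_pos_iff.mpr hx
  have key : (|μ.im| / 2 * ‖x‖) * ‖x‖ ≤ ‖u‖ * ‖x‖ := by
    have : |μ.im| * ((1/2) * ‖x‖^2) ≤ |μ.im| * t.re :=
      mul_le_mul_of_nonneg_left htre (abs_nonneg _)
    nlinarith
  exact le_of_mul_le_mul_right key hxpos

lemma V_sub_unit (μ : ℂ) (hμ : μ.im ≠ 0) :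
    ∃ Yop : Hs →L[ℂ] Hs, (∀ z, Qop (T (Qop (Yop z))) - μ • (Yop z) = z) ∧
      (∀ x, Yop (Qop (T (Qop x)) - μ • x) = x) := by
  set Sμ : Hs →L[ℂ] Hs := Qop ∘L T ∘L Qop - μ • 1 with hS
  have hSap : ∀ x, Sμ x = Qop (T (Qop x)) - μ • x := by
    intro x
    simp [hS, ContinuousLinearMap.sub_apply, ContinuousLinearMap.smul_apply,
      ContinuousLinearMap.one_apply]
  have hbb : ∀ x, |μ.im| / 2 * ‖x‖ ≤ ‖Sμ x‖ := by
    intro x; rw [hSap]; exact boundedBelow Omega T hT μ hμ x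
  have himpos : 0 < |μ.im| := abs_pos.mpr hμ
  have antilip : AntilipschitzWith (2 / |μ.im|).toNNReal Sμ := by
    refine ContinuousLinearMap.antilipschitz_of_bound Sμ (fun x => ?_)
    rw [Real.coe_toNNReal _ (by positivity)]
    rw [div_mul_eq_mul_div, le_div_iff₀ himpos]
    have := hbb x
    nlinarith [norm_nonneg (Sμ x)]
  have hker : LinearMap.ker (Sμ : Hs →ₗ[ℂ] Hs) = ⊥ := (LinearMap.ker_eq_bot (f := (Sμ : Hs →ₗ[ℂ] Hs))).mpr antilip.injective
  have hclosed : IsClosed (Set.range Sμ) :=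
    (antilip.isClosedEmbedding Sμ.uniformContinuous).isClosed_range
  have hrange : LinearMap.range (Sμ : Hs →ₗ[ℂ] Hs) = ⊤ := by
    set R : Submodule ℂ Hs := LinearMap.range (Sμ : Hs →ₗ[ℂ] Hs) with hR
    have hRclosed : IsClosed (R : Set Hs) := by
      rw [hR]
      exact hclosed
    haveI : CompleteSpace R := hRclosed.completeSpace_coe
    by_contra hRne
    have horth : Rᗮ ≠ ⊥ := by
      intro hbot
      exact hRne (Submodule.orthogonal_eq_bot_iff.mp hbot)
    obtain ⟨y, hyR, hy0⟩ := Submodule.exists_mem_ne_zero_of_ne_bot horth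
    set y' := Gop' y with hy'
    have hGy' : Gop y' = y := Gop_Gop' y
    have horto : ∀ xx : Hs, (inner ℂ (Sμ xx) y : ℂ) = 0 := by
      intro xx
      exact (Submodule.mem_orthogonal R y).mp hyR (Sμ xx) ⟨xx, rfl⟩
    have hz : ∀ xx : Hs,
        (inner ℂ (Gop xx) (Qop (T (Qop y')) - (starRingEnd ℂ) μ • y') : ℂ) = 0 := by
      intro xx
      have h0 := horto xx
      rw [hSap, ← hGy', ← gsa, map_sub, map_smul, inner_sub_left, inner_smul_left,
        symV Omega T hT xx y'] at h0
      rw [inner_sub_right, inner_smul_right]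
      exact h0
    have hzz : Qop (T (Qop y')) - (starRingEnd ℂ) μ • y' = 0 := by
      have h1 := hz (Gop' (Qop (T (Qop y')) - (starRingEnd ℂ) μ • y'))
      rw [Gop_Gop'] at h1
      exact inner_self_eq_zero.mp h1
    have hy'0 : y' = 0 := by
      have hcim : ((starRingEnd ℂ) μ).im ≠ 0 := by
        simpa [Complex.conj_im] using hμ
      have hb := boundedBelow Omega T hT ((starRingEnd ℂ) μ) hcim y'
      rw [hzz] at hb
      simp only [norm_zero] at hb
      have : ‖y'‖ ≤ 0 := by
        by_contra hc
        push_neg at hc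
        have : 0 < |((starRingEnd ℂ) μ).im| / 2 * ‖y'‖ := by positivity
        linarith
      have := norm_nonneg y'
      have : ‖y'‖ = 0 := le_antisymm ‹‖y'‖ ≤ 0› this
      exact norm_eq_zero.mp this
    exact hy0 (by rw [← hGy', hy'0, map_zero])
  let E := ContinuousLinearEquiv.ofBijective Sμ hker hrange
  refine ⟨E.symm.toContinuousLinearMap, fun z => ?_, fun x => ?_⟩
  · have h1 : Sμ (E.symm z) = z := by
      have : (E : Hs →L[ℂ] Hs) = Sμ := rfl
      have h2 := E.apply_symm_apply z
      rw [← this]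
      exact h2
    rw [← hSap]
    exact h1
  · have h1 : E.symm (E x) = x := E.symm_apply_apply x
    have : (E x : Hs) = Sμ x := rfl
    rw [← hSap]
    show E.symm (Sμ x) = x
    rw [← this]
    exact h1

lemma hTP_pt (x : Hs) : T (Pop x) = Pop (T (Pop x)) := by
  have h := ContinuousLinearMap.ext_iff.mp (hTP Omega T hT) x
  simpa using h

lemma hAA_pt (x : Hs) :
    Pop (T (Pop (Pop (T (Pop x)))))
      = ((-(2*Omega/3) : ℝ) : ℂ) • Pop (T (Pop x)) + ((-(Omega^2/12) : ℝ) : ℂ) • Pop x := by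
  have h := ContinuousLinearMap.ext_iff.mp (hAA Omega T hT) x
  simpa using h

lemma Xop_exists (lam : ℂ) (him : lam.im ≠ 0) :
    ∃ X : Hs →L[ℂ] Hs,
      (∀ x, X (Pop (T (Pop x)) - lam • x) = x) ∧
      (∀ z, Pop (T (Pop (X z))) - lam • (X z) = z) ∧
      (∀ q, Pop (X (Pop q)) = X (Pop q)) := by
  set a : ℂ := ((-(Omega/2) : ℝ) : ℂ) with haa
  set b : ℂ := ((-(Omega/6) : ℝ) : ℂ) with hbb
  have hlam0 : lam ≠ 0 := by
    intro h
    exact him (by rw [h]; rfl)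
  have ha : lam - a ≠ 0 := by
    intro h
    apply him
    have := congrArg Complex.im h
    simpa [haa, Complex.sub_im, Complex.ofReal_im] using this
  have hb : lam - b ≠ 0 := by
    intro h
    apply him
    have := congrArg Complex.im h
    simpa [hbb, Complex.sub_im, Complex.ofReal_im] using this
  set c : ℂ := -((lam - a) * (lam - b))⁻¹ with hcc
  set s : ℂ := a + b with hss
  set d : ℂ := c * (lam - s) with hdd
  set g : ℂ := -lam⁻¹ with hgg
  set X : Hs →L[ℂ] Hs := c • (Pop ∘L T ∘L Pop) + (d - g) • Pop + g • 1 with hXX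
  have X_apply : ∀ z, X z = c • Pop (T (Pop z)) + (d - g) • Pop z + g • z := by
    intro z
    rw [hXX]
    simp [ContinuousLinearMap.add_apply, ContinuousLinearMap.smul_apply,
      ContinuousLinearMap.comp_apply, ContinuousLinearMap.one_apply]
  have hs_cast : s = ((-(2*Omega/3) : ℝ) : ℂ) := by
    rw [hss, haa, hbb]; push_cast; ring
  have hr_cast : ((-(Omega^2/12) : ℝ) : ℂ) = -(a*b) := by
    rw [haa, hbb]; push_cast; ring
  have hab : (lam - a) * (lam - b) ≠ 0 := mul_ne_zero ha hb
  refine ⟨X, ?_, ?_, ?_⟩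
  · intro x
    rw [X_apply]
    simp only [map_sub, map_smul]
    rw [hAA_pt Omega T hT x, Pop_Pop (T (Pop x))]
    rw [← hs_cast, hr_cast]
    match_scalars <;> simp only [hdd, hss, hcc, hgg] <;> field_simp <;> ring
  · intro z
    rw [X_apply]
    simp only [map_add, map_smul]
    rw [hAA_pt Omega T hT z, Pop_Pop z, ← hs_cast, hr_cast]
    match_scalars <;> simp only [hdd, hss, hcc, hgg] <;> field_simp <;> ring
  · intro q
    rw [X_apply (Pop q)]
    simp only [map_add, map_smul, Pop_Pop]

end Ops2

end SpecAux

open SpecAux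

set_option maxHeartbeats 2000000 in
/-- **Proposition 5.1.2.** For `Ω > 0`, the matrix operator
`T e_ℓ = (1 − 6/λ_ℓ)(a_ℓ e_{ℓ−1} + a_{ℓ+1} e_{ℓ+1}) − (Ω/λ_ℓ) e_ℓ` (the representation
of `M₁ζ = A(x₃)ζ + B(x₃)Δ⁻¹ζ`, `A(x₃) = x₃`, `B(x₃) = Ω + 6x₃`, on `V₁` for the zonal
flow with stream function `cP₂(x₃)`) has only real spectrum. -/
theorem spectrum_real_P2_V1_Omega_pos
    (Omega : ℝ) (hOmega : 0 < Omega)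
    (T : lp (fun _ : {ℓ : ℕ // 1 ≤ ℓ} => ℂ) 2 →L[ℂ] lp (fun _ : {ℓ : ℕ // 1 ≤ ℓ} => ℂ) 2)
    (hT : ∀ ℓ : ℕ, 1 ≤ ℓ →
      T (e ℓ) = ((1 : ℂ) - 6 / (lamCoef ℓ : ℂ)) •
        ((aCoef ℓ : ℂ) • e (ℓ - 1) + (aCoef (ℓ + 1) : ℂ) • e (ℓ + 1)) - ((Omega / lamCoef ℓ : ℝ) : ℂ) • e ℓ) :
    ∀ lam ∈ spectrum ℂ T, lam.im = 0 := by
  intro lam hmem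
  by_contra him
  apply spectrum.mem_iff.mp hmem
  obtain ⟨Yop, hYr, hYl⟩ := V_sub_unit Omega T hT lam him
  obtain ⟨X, hXl, hXr, hXP⟩ := Xop_exists Omega T hT lam him
  have hlam0 : lam ≠ 0 := fun h => him (by rw [h]; rfl)
  have hTPp : ∀ x, T (Pop x) = Pop (T (Pop x)) := hTP_pt Omega T hT
  have hPQ : ∀ z : Hs, Pop z + Qop z = z := by
    intro z
    rw [Qop_apply]
    abel
  set S : Hs →L[ℂ] Hs := T - lam • 1 with hSdef
  have hSap : ∀ x, S x = T x - lam • x := by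
    intro x
    rw [hSdef]
    simp [ContinuousLinearMap.sub_apply, ContinuousLinearMap.smul_apply,
      ContinuousLinearMap.one_apply]
  have hker : ∀ x, S x = 0 → x = 0 := by
    intro x hx
    have hx' : T x = lam • x := by
      have h0 := hSap x
      rw [hx] at h0
      exact sub_eq_zero.mp h0.symm
    have h1 : Qop (T x) = lam • Qop x := by rw [hx', map_smul]
    have h2 : Qop (T x) = Qop (T (Qop x)) := by
      have hTx : T x = T (Pop x) + T (Qop x) := by rw [← map_add, hPQ]
      rw [hTx, map_add, hTPp x, Qop_Pop, zero_add]
    have h3 : Qop (T (Qop (Qop x))) - lam • Qop x = 0 := by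
      rw [Qop_Qop, ← h2, h1, sub_self]
    have h4 : Qop x = 0 := by
      have h5 := hYl (Qop x)
      rw [h3, map_zero] at h5
      exact h5.symm
    have h5 : Pop x = x := by
      have h6 := hPQ x
      rw [h4, add_zero] at h6
      exact h6
    have h6 : Pop (T (Pop x)) - lam • x = 0 := by
      rw [← hTPp x, h5, hx', sub_self]
    have h7 := hXl x
    rw [h6, map_zero] at h7
    exact h7.symm
  have hsurj : ∀ y, ∃ x, S x = y := by
    intro y
    set v := Yop (Qop y) with hv
    have hv1 : Qop (T (Qop v)) - lam • v = Qop y := hYr (Qop y)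
    have hPv : Pop v = 0 := by
      have h0 := congrArg Pop hv1
      rw [map_sub, map_smul, Pop_Qop, Pop_Qop, zero_sub, neg_eq_zero] at h0
      exact (smul_eq_zero.mp h0).resolve_left hlam0
    have hQv : Qop v = v := by rw [Qop_apply, hPv, sub_zero]
    set wv : Hs := Pop (y - T v) with hwv
    set u := X wv with hu
    have hPu : Pop u = u := by
      rw [hu, hwv]
      exact hXP (y - T v)
    have hu1 : T u - lam • u = wv := by
      have h7 := hXr wv
      rw [← hu] at h7
      have hTu : T u = Pop (T (Pop u)) := by
        conv_lhs => rw [← hPu, hTPp u]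
      rw [hTu]
      exact h7
    have hv2 : T v - lam • v = Pop (T v) + Qop y := by
      have h8 : T v = Pop (T v) + Qop (T v) := (hPQ (T v)).symm
      have h9 : Qop (T v) = Qop (T (Qop v)) := by rw [hQv]
      calc T v - lam • v = Pop (T v) + Qop (T v) - lam • v := by rw [← h8]
        _ = Pop (T v) + (Qop (T (Qop v)) - lam • v) := by rw [h9]; abel
        _ = Pop (T v) + Qop y := by rw [hv1]
    refine ⟨u + v, ?_⟩
    rw [hSap, map_add]
    calc T u + T v - lam • (u + v) = (T u - lam • u) + (T v - lam • v) := by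
          rw [smul_add]; abel
      _ = wv + (Pop (T v) + Qop y) := by rw [hu1, hv2]
      _ = (Pop y - Pop (T v)) + (Pop (T v) + Qop y) := by rw [hwv, map_sub]
      _ = Pop y + Qop y := by abel
      _ = y := hPQ y
  have hkerS : LinearMap.ker (S : Hs →ₗ[ℂ] Hs) = ⊥ := (LinearMap.ker_eq_bot' (f := (S : Hs →ₗ[ℂ] Hs))).mpr (fun m hm => hker m hm)
  have hrangeS : LinearMap.range (S : Hs →ₗ[ℂ] Hs) = ⊤ := LinearMap.range_eq_top.mpr (fun y => hsurj y)
  let E := ContinuousLinearEquiv.ofBijective S hkerS hrangeS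
  have hunit : IsUnit S := by
    refine ⟨⟨S, E.symm.toContinuousLinearMap, ?_, ?_⟩, rfl⟩
    · apply ContinuousLinearMap.ext
      intro x
      show S (E.symm x) = (1 : Hs →L[ℂ] Hs) x
      have h1 : E (E.symm x) = x := E.apply_symm_apply x
      have h2 : (E (E.symm x) : Hs) = S (E.symm x) := rfl
      rw [← h2, h1]
      rfl
    · apply ContinuousLinearMap.ext
      intro x
      show E.symm (S x) = (1 : Hs →L[ℂ] Hs) x
      have h2 : (E x : Hs) = S x := rfl
      rw [← h2, E.symm_apply_apply]
      rfl
  have halg : (algebraMap ℂ (Hs →L[ℂ] Hs)) lam - T = -S := by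
    rw [hSdef, Algebra.algebraMap_eq_smul_one, neg_sub]
  rw [halg]
  exact hunit.neg
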